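/- Let (p_n)_{n≥0} be monic real polynomials, deg p_n = n, satisfying the recurrence x p_n = p_{n+1} + Σ_{k=0}^n J_{n,k} p_k. Suppose there is a compact interval Δ ⊂ ℝ such that each p_n has exactly n simple zeros lying inside Δ, and the zeros of p_n and p_{n+1} interlace for every n. Then for every N ≥ 0, sup_{n ≥ N} |J_{n,n−N}| < ∞; i.e., the recurrence matrix J is bounded in every fixed neighbourhood of the diagonal. -/

import Mathlib

open Polynomial

lemma reflect_prod_lin {ι : Type*} (s : Finset ι) (c : ι → ℝ) :
    reflect s.card (∏ k ∈ s, (X - C (c k))) = ∏ k ∈ s, (1 - C (c k) * X) := by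
  induction s using Finset.cons_induction with
  | empty => simp [reflect_one]
  | cons a s ha ih =>
      rw [Finset.prod_cons, Finset.prod_cons, Finset.card_cons, add_comm s.card 1,
        reflect_mul _ _ (by simpa using natDegree_X_sub_C_le (c a))
          (le_trans (natDegree_prod_le _ _) (by simp [natDegree_X_sub_C])), ih,
        reflect_sub, reflect_one_X, reflect_C]
      ring

lemma reflect_finset_sum {ι : Type*} (s : Finset ι) (N : ℕ) (f : ι → Polynomial ℝ) :
    reflect N (∑ k ∈ s, f k) = ∑ k ∈ s, reflect N (f k) := by
  induction s using Finset.cons_induction with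
  | empty => simp
  | cons a s ha ih => rw [Finset.sum_cons, Finset.sum_cons, reflect_add, ih]

lemma reflect_prod_lin_fin (m : ℕ) (c : Fin m → ℝ) :
    reflect m (∏ k : Fin m, (X - C (c k))) = ∏ k : Fin m, (1 - C (c k) * X) := by
  simpa using reflect_prod_lin (Finset.univ : Finset (Fin m)) c

lemma constCoeff_one_sub (c : ℝ) :
    PowerSeries.constantCoeff (R := ℝ) (1 - PowerSeries.C (R := ℝ) c * PowerSeries.X) = 1 := by
  simp

lemma geom_inv_coeff (c : ℝ) (n : ℕ) :
    PowerSeries.coeff (R := ℝ) n (1 - PowerSeries.C (R := ℝ) c * PowerSeries.X)⁻¹ = c ^ n := by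
  have h0 : PowerSeries.constantCoeff (R := ℝ) (1 - PowerSeries.C (R := ℝ) c * PowerSeries.X) ≠ 0 := by
    rw [constCoeff_one_sub]; exact one_ne_zero
  have h : (PowerSeries.mk fun m => c ^ m) * (1 - PowerSeries.C (R := ℝ) c * PowerSeries.X) = 1 := by
    rw [mul_comm]
    ext m
    rw [sub_mul, one_mul, map_sub]
    cases m with
    | zero => simp
    | succ m =>
        rw [mul_assoc]
        simp [PowerSeries.coeff_C_mul, PowerSeries.coeff_succ_X_mul, PowerSeries.coeff_mk,
          pow_succ, PowerSeries.coeff_one]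
        ring
  have h2 : (PowerSeries.mk fun m => c ^ m) = (1 - PowerSeries.C (R := ℝ) c * PowerSeries.X)⁻¹ :=
    (PowerSeries.eq_inv_iff_mul_eq_one h0).mpr h
  rw [← h2, PowerSeries.coeff_mk]

lemma constCoeff_prod_one_sub {ι : Type*} (s : Finset ι) (c : ι → ℝ) :
    PowerSeries.constantCoeff (R := ℝ) (∏ k ∈ s, (1 - PowerSeries.C (R := ℝ) (c k) * PowerSeries.X)) = 1 := by
  rw [map_prod]
  simp

/-- Key bound: coefficients of the Markov ratio are bounded by `M ^ r`. -/
lemma markov_coeff_bound (M : ℝ) (hM : 1 ≤ M)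
    (i : ℕ) (u : Fin i → ℝ) (v : Fin (i+1) → ℝ) (hv : StrictMono v)
    (hvM : ∀ j, |v j| ≤ M)
    (hint : ∀ k : Fin i, v k.castSucc < u k ∧ u k < v k.succ) (r : ℕ) :
    |PowerSeries.coeff (R := ℝ) r ((∏ k : Fin i, (1 - PowerSeries.C (R := ℝ) (u k) * PowerSeries.X)) *
      (∏ j : Fin (i+1), (1 - PowerSeries.C (R := ℝ) (v j) * PowerSeries.X))⁻¹)| ≤ M ^ r := by
  classical
  set d : Fin (i+1) → ℝ := fun j => ∏ k : Fin i, (v j - v (j.succAbove k)) with hd_def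
  set num : Fin (i+1) → ℝ := fun j => ∏ k : Fin i, (v j - u k) with hnum_def
  set w : Fin (i+1) → ℝ := fun j => num j / d j with hw_def
  have hd : ∀ j, d j ≠ 0 := by
    intro j
    refine Finset.prod_ne_zero_iff.mpr fun k _ => sub_ne_zero.mpr ?_
    exact fun h => (Fin.succAbove_ne j k) (hv.injective h).symm
  have hfac : ∀ (j : Fin (i+1)) (k : Fin i),
      0 ≤ (v j - u k) * (v j - v (j.succAbove k)) := by
    intro j k
    rcases lt_or_ge k.castSucc j with h | h
    · rw [Fin.succAbove_of_castSucc_lt _ _ h]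
      have h1 : u k < v j := by
        have hsle : k.succ ≤ j := Fin.castSucc_lt_iff_succ_le.mp h
        exact lt_of_lt_of_le (hint k).2 (hv.monotone hsle)
      have h2 : v k.castSucc < v j := hv h
      exact mul_nonneg (by linarith) (by linarith)
    · rw [Fin.succAbove_of_le_castSucc _ _ h]
      have h1 : v j ≤ v k.castSucc := hv.monotone h
      have h2 : v k.castSucc < u k := (hint k).1
      have h3 : v j < v k.succ := hv (lt_of_le_of_lt h Fin.castSucc_lt_succ)
      nlinarith
  have hnumd : ∀ j, 0 ≤ num j * d j := by
    intro j
    rw [hnum_def, hd_def, ← Finset.prod_mul_distrib]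
    exact Finset.prod_nonneg fun k _ => hfac j k
  have hw : ∀ j, 0 ≤ w j := by
    intro j
    have : w j = num j * d j / (d j) ^ 2 := by
      rw [hw_def, sq]
      exact (mul_div_mul_right _ _ (hd j)).symm
    rw [this]
    exact div_nonneg (hnumd j) (sq_nonneg _)
  -- Lagrange interpolation identity
  set P : Polynomial ℝ := ∏ k : Fin i, (X - C (u k)) with hP_def
  set Vp : Fin (i+1) → Polynomial ℝ := fun j => ∏ k : Fin i, (X - C (v (j.succAbove k)))
    with hVp_def
  have hVself : ∀ j, eval (v j) (Vp j) = d j := by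
    intro j; simp [hVp_def, hd_def, eval_prod]
  have hVother : ∀ j j' : Fin (i+1), j ≠ j' → eval (v j') (Vp j) = 0 := by
    intro j j' hjj'
    obtain ⟨k, hk⟩ := Fin.exists_succAbove_eq (Ne.symm hjj')
    rw [hVp_def]
    simp only [eval_prod]
    refine Finset.prod_eq_zero (Finset.mem_univ k) ?_
    rw [hk]; simp
  have hlag : P = ∑ j : Fin (i+1), C (w j) * Vp j := by
    have hdeg1 : P.natDegree ≤ i := by
      refine le_trans (natDegree_prod_le _ _) ?_
      simp [natDegree_X_sub_C]
    have hdeg2 : (∑ j : Fin (i+1), C (w j) * Vp j).natDegree ≤ i := by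
      refine le_trans (natDegree_sum_le _ _) ?_
      rw [Finset.fold_max_le]
      refine ⟨Nat.zero_le _, fun j _ => ?_⟩
      refine le_trans (natDegree_mul_le) ?_
      simp only [natDegree_C, zero_add]
      refine le_trans (natDegree_prod_le _ _) ?_
      simp [natDegree_X_sub_C]
    have hzero : P - ∑ j : Fin (i+1), C (w j) * Vp j = 0 := by
      apply eq_zero_of_natDegree_lt_card_of_eval_eq_zero _ hv.injective
      · intro j'
        rw [eval_sub, eval_finset_sum]
        have hsum : ∑ j : Fin (i+1), eval (v j') (C (w j) * Vp j) = w j' * d j' := by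
          rw [Finset.sum_eq_single j']
          · rw [eval_mul, eval_C, hVself]
          · intro j _ hj
            rw [eval_mul, hVother j j' hj, mul_zero]
          · intro h; exact absurd (Finset.mem_univ j') h
        rw [hsum, hw_def]
        have : num j' / d j' * d j' = num j' := div_mul_cancel₀ _ (hd j')
        rw [this, hP_def, eval_prod]
        simp [hnum_def]
      · rw [Fintype.card_fin]
        have : (P - ∑ j : Fin (i+1), C (w j) * Vp j).natDegree ≤ i :=
          le_trans (natDegree_sub_le _ _) (max_le hdeg1 hdeg2)
        omega
    exact sub_eq_zero.mp hzero
  -- reflect the identity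
  have hreflP : reflect i P = ∏ k : Fin i, (1 - C (u k) * X) := by
    rw [hP_def]; exact reflect_prod_lin_fin i u
  have hreflV : ∀ j, reflect i (Vp j) =
      ∏ k : Fin i, (1 - C (v (j.succAbove k)) * X) := by
    intro j
    rw [hVp_def]; exact reflect_prod_lin_fin i _
  have hrefl : (∏ k : Fin i, (1 - C (u k) * X)) =
      ∑ j : Fin (i+1), C (w j) * ∏ k : Fin i, (1 - C (v (j.succAbove k)) * X) := by
    rw [← hreflP]
    conv_lhs => rw [hlag]
    rw [reflect_finset_sum]
    exact Finset.sum_congr rfl fun j _ => by rw [reflect_C_mul, hreflV]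
  -- move to power series
  have hps := congrArg (Polynomial.coeToPowerSeries.ringHom (R := ℝ)) hrefl
  simp only [map_prod, map_sum, map_mul, map_sub, map_one,
    Polynomial.coeToPowerSeries.ringHom_apply, Polynomial.coe_C, Polynomial.coe_X] at hps
  set Av : PowerSeries ℝ := ∏ j : Fin (i+1), (1 - PowerSeries.C (R := ℝ) (v j) * PowerSeries.X)
    with hAv_def
  have hAv0 : PowerSeries.constantCoeff (R := ℝ) Av = 1 := constCoeff_prod_one_sub _ _
  set Bj : Fin (i+1) → PowerSeries ℝ :=
    fun j => ∏ k : Fin i, (1 - PowerSeries.C (R := ℝ) (v (j.succAbove k)) * PowerSeries.X) with hBj_def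
  have hsplit : ∀ j, Av = (1 - PowerSeries.C (R := ℝ) (v j) * PowerSeries.X) * Bj j := by
    intro j
    rw [hAv_def, hBj_def,
      Fin.prod_univ_succAbove (fun l => (1 - PowerSeries.C (R := ℝ) (v l) * PowerSeries.X)) j]
  have hBjAv : ∀ j, Bj j * Av⁻¹ = (1 - PowerSeries.C (R := ℝ) (v j) * PowerSeries.X)⁻¹ := by
    intro j
    have h1 : (1 - PowerSeries.C (R := ℝ) (v j) * PowerSeries.X)⁻¹ * Av = Bj j := by
      rw [hsplit j, ← mul_assoc,
        PowerSeries.inv_mul_cancel _ (by rw [constCoeff_one_sub]; exact one_ne_zero), one_mul]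
    rw [← h1, mul_assoc, PowerSeries.mul_inv_cancel _ (by rw [hAv0]; exact one_ne_zero), mul_one]
  have hmain : (∏ k : Fin i, (1 - PowerSeries.C (R := ℝ) (u k) * PowerSeries.X)) * Av⁻¹ =
      ∑ j : Fin (i+1), PowerSeries.C (R := ℝ) (w j) *
        (1 - PowerSeries.C (R := ℝ) (v j) * PowerSeries.X)⁻¹ := by
    rw [hps, Finset.sum_mul]
    exact Finset.sum_congr rfl fun j _ => by rw [mul_assoc, hBjAv j]
  have hcoeff : ∀ m, PowerSeries.coeff (R := ℝ) m
      ((∏ k : Fin i, (1 - PowerSeries.C (R := ℝ) (u k) * PowerSeries.X)) * Av⁻¹)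
      = ∑ j : Fin (i+1), w j * (v j) ^ m := by
    intro m
    rw [hmain, map_sum]
    exact Finset.sum_congr rfl fun j _ => by rw [PowerSeries.coeff_C_mul, geom_inv_coeff]
  have hsumw : ∑ j : Fin (i+1), w j = 1 := by
    have h0 := hcoeff 0
    rw [PowerSeries.coeff_zero_eq_constantCoeff, map_mul, PowerSeries.constantCoeff_inv, hAv0,
      constCoeff_prod_one_sub] at h0
    simpa using h0.symm
  rw [hcoeff r]
  calc |∑ j : Fin (i+1), w j * v j ^ r| ≤ ∑ j : Fin (i+1), |w j * v j ^ r| :=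
        Finset.abs_sum_le_sum_abs _ _
    _ ≤ ∑ j : Fin (i+1), w j * M ^ r := by
        refine Finset.sum_le_sum fun j _ => ?_
        rw [abs_mul, abs_of_nonneg (hw j), abs_pow]
        exact mul_le_mul_of_nonneg_left (pow_le_pow_left₀ (abs_nonneg _) (hvM j) r) (hw j)
    _ = M ^ r := by rw [← Finset.sum_mul, hsumw, one_mul]


lemma telescope_bound (M : ℝ) (hM : 1 ≤ M) (A : ℕ → PowerSeries ℝ)
    (hA0 : ∀ m, PowerSeries.constantCoeff (R := ℝ) (A m) = 1)
    (hR : ∀ i r, |PowerSeries.coeff (R := ℝ) r (A i * (A (i+1))⁻¹)| ≤ M ^ r) :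
    ∀ s k r, |PowerSeries.coeff (R := ℝ) r (A k * (A (k+s))⁻¹)| ≤ (((r : ℝ)+1) * M) ^ s * M ^ r := by
  intro s
  induction s with
  | zero =>
      intro k r
      have h1 : A k * (A (k+0))⁻¹ = 1 := by
        rw [Nat.add_zero]
        exact PowerSeries.mul_inv_cancel _ (by rw [hA0]; exact one_ne_zero)
      rw [h1, pow_zero, one_mul, PowerSeries.coeff_one]
      split_ifs with h
      · subst h; simp
      · rw [abs_zero]; positivity
  | succ s ih =>
      intro k r
      have hsplit : A k * (A (k+(s+1)))⁻¹ =
          (A k * (A (k+1))⁻¹) * (A (k+1) * (A (k+1+s))⁻¹) := by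
        have h1 : (A (k+1))⁻¹ * A (k+1) = 1 :=
          PowerSeries.inv_mul_cancel _ (by rw [hA0]; exact one_ne_zero)
        have e : k + (s+1) = k+1+s := by omega
        rw [e, mul_assoc (A k), ← mul_assoc ((A (k+1))⁻¹), h1, one_mul]
      rw [hsplit, PowerSeries.coeff_mul]
      have hterm : ∀ q ∈ Finset.HasAntidiagonal.antidiagonal r,
          |PowerSeries.coeff (R := ℝ) q.1 (A k * (A (k+1))⁻¹) *
            PowerSeries.coeff (R := ℝ) q.2 (A (k+1) * (A (k+1+s))⁻¹)|
            ≤ (((r:ℝ)+1)*M)^s * M^r := by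
        intro q hq
        have hq' : q.1 + q.2 = r := Finset.HasAntidiagonal.mem_antidiagonal.mp hq
        rw [abs_mul]
        have h1 := hR k q.1
        have h2 := ih (k+1) q.2
        have hM0 : (0:ℝ) ≤ M := le_trans zero_le_one hM
        calc |PowerSeries.coeff (R := ℝ) q.1 (A k * (A (k+1))⁻¹)| *
              |PowerSeries.coeff (R := ℝ) q.2 (A (k+1) * (A (k+1+s))⁻¹)|
            ≤ M^q.1 * ((((q.2:ℝ)+1)*M)^s * M^q.2) :=
              mul_le_mul h1 h2 (abs_nonneg _) (by positivity)
          _ = (((q.2:ℝ)+1)*M)^s * M^r := by rw [← hq', pow_add]; ring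
          _ ≤ (((r:ℝ)+1)*M)^s * M^r := by
              have hle : ((q.2:ℝ)+1)*M ≤ ((r:ℝ)+1)*M := by
                have : (q.2 : ℝ) ≤ (r : ℝ) := by exact_mod_cast (by omega : q.2 ≤ r)
                nlinarith
              exact mul_le_mul_of_nonneg_right
                (pow_le_pow_left₀ (by positivity) hle s) (by positivity)
      calc |∑ q ∈ Finset.HasAntidiagonal.antidiagonal r, PowerSeries.coeff (R := ℝ) q.1 (A k * (A (k+1))⁻¹) *
              PowerSeries.coeff (R := ℝ) q.2 (A (k+1) * (A (k+1+s))⁻¹)|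
          ≤ ∑ q ∈ Finset.HasAntidiagonal.antidiagonal r, |PowerSeries.coeff (R := ℝ) q.1 (A k * (A (k+1))⁻¹) *
              PowerSeries.coeff (R := ℝ) q.2 (A (k+1) * (A (k+1+s))⁻¹)| :=
            Finset.abs_sum_le_sum_abs _ _
        _ ≤ ∑ _q ∈ Finset.HasAntidiagonal.antidiagonal r, (((r:ℝ)+1)*M)^s * M^r :=
            Finset.sum_le_sum hterm
        _ = ((r:ℝ)+1) * ((((r:ℝ)+1)*M)^s * M^r) := by
            rw [Finset.sum_const, Finset.Nat.card_antidiagonal, nsmul_eq_mul]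
            push_cast; ring
        _ ≤ (((r:ℝ)+1)*M)^(s+1) * M^r := by
            have hM0 : (0:ℝ) ≤ M := le_trans zero_le_one hM
            have h1 : ((r:ℝ)+1) ≤ ((r:ℝ)+1)*M :=
              le_mul_of_one_le_right (by positivity) hM
            have h2 : (0:ℝ) ≤ (((r:ℝ)+1)*M)^s * M^r := by positivity
            rw [pow_succ]
            nlinarith [pow_nonneg (by positivity : (0:ℝ) ≤ ((r:ℝ)+1)*M) s,
              pow_nonneg hM0 r]

lemma main_generic (M : ℝ) (hM : 1 ≤ M) (A : ℕ → PowerSeries ℝ) (J : ℕ → ℕ → ℝ)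
    (hA0 : ∀ m, PowerSeries.constantCoeff (R := ℝ) (A m) = 1)
    (hR : ∀ i r, |PowerSeries.coeff (R := ℝ) r (A i * (A (i+1))⁻¹)| ≤ M ^ r)
    (hI : ∀ n, A n = A (n+1) + ∑ k ∈ Finset.range (n+1),
        PowerSeries.C (R := ℝ) (J n k) * (A k * PowerSeries.X ^ (n+1-k))) :
    ∀ N : ℕ, ∃ C : ℝ, ∀ n : ℕ, N ≤ n → |J n (n - N)| ≤ C := by
  have hB := telescope_bound M hM A hA0 hR
  have hA0ne : ∀ m, PowerSeries.constantCoeff (R := ℝ) (A m) ≠ 0 := fun m => by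
    rw [hA0]; exact one_ne_zero
  have hcoeff0 : ∀ k m, PowerSeries.coeff (R := ℝ) 0 (A k * (A m)⁻¹) = 1 := by
    intro k m
    rw [PowerSeries.coeff_zero_eq_constantCoeff, map_mul, hA0, PowerSeries.constantCoeff_inv, hA0]
    norm_num
  intro N
  induction N using Nat.strong_induction_on with
  | _ N IH =>
  have hex : ∀ j : ℕ, ∃ Cj : ℝ, j < N → ∀ n : ℕ, j ≤ n → |J n (n - j)| ≤ Cj := by
    intro j
    by_cases h : j < N
    · obtain ⟨Cj, hCj⟩ := IH j h
      exact ⟨Cj, fun _ => hCj⟩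
    · exact ⟨0, fun h' => absurd h' h⟩
  choose Cf hCf using hex
  refine ⟨M^(N+1) + ∑ i ∈ Finset.range N,
    Cf (N-1-i) * ((((i:ℝ)+2))*M)^(N-i) * M^(i+1), ?_⟩
  intro n hn
  have hId : A n * (A (n+1))⁻¹ = 1 + ∑ k ∈ Finset.range (n+1),
      ((PowerSeries.C (R := ℝ) (J n k) * (A k * (A (n+1))⁻¹)) * PowerSeries.X ^ (n+1-k)) := by
    conv_lhs => rw [hI n]
    rw [add_mul, PowerSeries.mul_inv_cancel _ (hA0ne (n+1)), Finset.sum_mul]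
    congr 1
    exact Finset.sum_congr rfl fun k _ => by ring
  have hco := congrArg (PowerSeries.coeff (R := ℝ) (N+1)) hId
  rw [map_add, map_sum] at hco
  simp only [PowerSeries.coeff_mul_X_pow', PowerSeries.coeff_C_mul, PowerSeries.coeff_one,
    Nat.succ_ne_zero, if_false, zero_add] at hco
  have hsplit : (∑ k ∈ Finset.range (n+1),
      if n + 1 - k ≤ N + 1 then
        J n k * (PowerSeries.coeff (R := ℝ) (N + 1 - (n + 1 - k))) (A k * (A (n + 1))⁻¹) else 0)
      = J n (n-N) + ∑ i ∈ Finset.range N,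
          J n (n-N+(i+1)) * PowerSeries.coeff (R := ℝ) (i+1) (A (n-N+(i+1)) * (A (n+1))⁻¹) := by
    rw [Finset.range_eq_Ico, ← Finset.sum_Ico_consecutive _ (Nat.zero_le (n-N))
      (by omega : n-N ≤ n+1)]
    have h1 : (∑ k ∈ Finset.Ico 0 (n-N), if n + 1 - k ≤ N + 1 then
        J n k * (PowerSeries.coeff (R := ℝ) (N + 1 - (n + 1 - k))) (A k * (A (n + 1))⁻¹) else 0) = 0 :=
      Finset.sum_eq_zero fun k hk => by
        have hk2 := (Finset.mem_Ico.mp hk).2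
        rw [if_neg (by omega)]
    rw [h1, zero_add, Finset.sum_Ico_eq_sum_range]
    have h2 : n+1-(n-N) = N+1 := by omega
    rw [h2, Finset.sum_range_succ']
    have hzt : (if n+1-(n-N+0) ≤ N+1 then J n (n-N+0) *
        PowerSeries.coeff (R := ℝ) (N+1-(n+1-(n-N+0))) (A (n-N+0) * (A (n+1))⁻¹) else 0)
        = J n (n-N) := by
      have e1 : n + 1 - (n - N + 0) = N + 1 := by omega
      rw [e1, if_pos le_rfl, Nat.sub_self, hcoeff0, mul_one, Nat.add_zero]
    have hst : (∑ i ∈ Finset.range N, if n+1-(n-N+(i+1)) ≤ N+1 then J n (n-N+(i+1)) *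
        PowerSeries.coeff (R := ℝ) (N+1-(n+1-(n-N+(i+1)))) (A (n-N+(i+1)) * (A (n+1))⁻¹) else 0)
        = ∑ i ∈ Finset.range N,
          J n (n-N+(i+1)) * PowerSeries.coeff (R := ℝ) (i+1) (A (n-N+(i+1)) * (A (n+1))⁻¹) := by
      refine Finset.sum_congr rfl fun i hi => ?_
      have hi' : i < N := Finset.mem_range.mp hi
      have e1 : n + 1 - (n - N + (i+1)) = N - i := by omega
      rw [e1, if_pos (by omega : N - i ≤ N + 1)]
      have e2 : N + 1 - (N - i) = i + 1 := by omega
      rw [e2]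
    rw [hzt, hst, add_comm, Finset.range_eq_Ico]
  rw [hsplit] at hco
  have hJeq : J n (n - N) = PowerSeries.coeff (R := ℝ) (N+1) (A n * (A (n+1))⁻¹)
      - ∑ i ∈ Finset.range N,
          J n (n-N+(i+1)) * PowerSeries.coeff (R := ℝ) (i+1) (A (n-N+(i+1)) * (A (n+1))⁻¹) := by
    rw [hco]; ring
  rw [hJeq]
  have htri : |PowerSeries.coeff (R := ℝ) (N+1) (A n * (A (n+1))⁻¹)
      - ∑ i ∈ Finset.range N,
          J n (n-N+(i+1)) * PowerSeries.coeff (R := ℝ) (i+1) (A (n-N+(i+1)) * (A (n+1))⁻¹)|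
      ≤ |PowerSeries.coeff (R := ℝ) (N+1) (A n * (A (n+1))⁻¹)|
        + |∑ i ∈ Finset.range N,
          J n (n-N+(i+1)) * PowerSeries.coeff (R := ℝ) (i+1) (A (n-N+(i+1)) * (A (n+1))⁻¹)| := by
    rw [sub_eq_add_neg]
    exact le_trans (abs_add_le _ _) (by rw [abs_neg])
  refine le_trans htri (add_le_add (hR n (N+1)) ?_)
  refine le_trans (Finset.abs_sum_le_sum_abs _ _) (Finset.sum_le_sum fun i hi => ?_)
  have hi' : i < N := Finset.mem_range.mp hi
  rw [abs_mul]
  have hJb : |J n (n - N + (i+1))| ≤ Cf (N-1-i) := by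
    have h := hCf (N-1-i) (by omega) n (by omega)
    have e : n - (N-1-i) = n - N + (i+1) := by omega
    rwa [e] at h
  have hCfnn : 0 ≤ Cf (N-1-i) :=
    le_trans (abs_nonneg _) (hCf (N-1-i) (by omega) n (by omega))
  have hcb : |PowerSeries.coeff (R := ℝ) (i+1) (A (n-N+(i+1)) * (A (n+1))⁻¹)|
      ≤ (((i:ℝ)+2)*M)^(N-i) * M^(i+1) := by
    have h := hB (N-i) (n-N+(i+1)) (i+1)
    have e : n - N + (i+1) + (N-i) = n+1 := by omega
    rw [e] at h
    have ecast : (((i+1:ℕ):ℝ)+1) = ((i:ℝ)+2) := by push_cast; ring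
    rwa [ecast] at h
  calc |J n (n - N + (i+1))| * |PowerSeries.coeff (R := ℝ) (i+1) (A (n-N+(i+1)) * (A (n+1))⁻¹)|
      ≤ Cf (N-1-i) * ((((i:ℝ)+2)*M)^(N-i) * M^(i+1)) :=
        mul_le_mul hJb hcb (abs_nonneg _) hCfnn
    _ = Cf (N-1-i) * (((i:ℝ)+2)*M)^(N-i) * M^(i+1) := by ring

/-- Let `(p n)` be monic real polynomials with `deg p_n = n` satisfying the recurrence
`x p_n = p_{n+1} + ∑_{k=0}^n J_{n,k} p_k`. If each `p n` has exactly `n` simple zeros lying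
in a compact interval `Δ = [a,b]` and the zeros of consecutive polynomials interlace, then
for every `N ≥ 0` one has `sup_{n ≥ N} |J_{n,n-N}| < ∞`. -/
theorem recurrence_coefficients_near_diagonal_bounded (a b : ℝ) (hab : a ≤ b)
    (p : ℕ → Polynomial ℝ) (J : ℕ → ℕ → ℝ) (x : (n : ℕ) → Fin n → ℝ)
    (hrec : ∀ ℓ : ℕ, X * p ℓ = p (ℓ + 1) + ∑ k ∈ Finset.range (ℓ + 1), C (J ℓ k) * p k)
    (hx : ∀ n, StrictMono (x n))
    (hxΔ : ∀ n, ∀ k : Fin n, x n k ∈ Set.Icc a b)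
    (hp : ∀ n, p n = ∏ k : Fin n, (X - C (x n k)))
    (hinter : ∀ n, ∀ k : Fin n, x (n + 1) k.castSucc < x n k ∧ x n k < x (n + 1) k.succ) :
    ∀ N : ℕ, ∃ C : ℝ, ∀ n : ℕ, N ≤ n → |J n (n - N)| ≤ C := by
  intro N
  set M : ℝ := max 1 (max |a| |b|) with hM_def
  have hM : 1 ≤ M := le_max_left _ _
  have hxM : ∀ n (k : Fin n), |x n k| ≤ M := by
    intro n k
    obtain ⟨h1, h2⟩ := hxΔ n k
    have hl : -(max |a| |b|) ≤ x n k :=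
      le_trans (neg_le_neg (le_max_left |a| |b|)) (le_trans (neg_abs_le a) h1)
    have hu : x n k ≤ max |a| |b| :=
      le_trans h2 (le_trans (le_abs_self b) (le_max_right |a| |b|))
    exact le_trans (abs_le.mpr ⟨hl, hu⟩) (le_max_right _ _)
  have hpdeg : ∀ m, (p m).natDegree ≤ m := by
    intro m
    rw [hp m]
    refine le_trans (natDegree_prod_le _ _) ?_
    simp [natDegree_X_sub_C]
  refine main_generic M hM
    (fun m => ∏ k : Fin m, (1 - PowerSeries.C (R := ℝ) (x m k) * PowerSeries.X)) J
    (fun m => constCoeff_prod_one_sub _ _) ?_ ?_ N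
  · intro i r
    exact markov_coeff_bound M hM i (x i) (x (i+1)) (hx (i+1)) (fun j => hxM _ j) (hinter i) r
  · intro n
    have h1 : reflect (n+1) (X * p n) = ∏ k : Fin n, (1 - Polynomial.C (x n k) * X) := by
      have hm := reflect_mul (X : Polynomial ℝ) (p n) (F := 1) (G := n) natDegree_X_le (hpdeg n)
      rw [add_comm 1 n] at hm
      rw [hm, reflect_one_X, one_mul, hp n, reflect_prod_lin_fin]
    have h2 : ∀ k, k ≤ n → reflect (n+1) (p k) =
        (∏ l : Fin k, (1 - Polynomial.C (x k l) * X)) * X ^ (n+1-k) := by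
      intro k hk
      have hm := reflect_mul (p k) (1 : Polynomial ℝ) (F := k) (G := n+1-k) (hpdeg k) (by simp)
      rw [mul_one] at hm
      have e : k + (n+1-k) = n+1 := by omega
      rw [e] at hm
      rw [hm, reflect_one, hp k, reflect_prod_lin_fin]
    have h3 := congrArg (reflect (n+1)) (hrec n)
    rw [h1, reflect_add, reflect_finset_sum] at h3
    have h4 : reflect (n+1) (p (n+1)) =
        ∏ k : Fin (n+1), (1 - Polynomial.C (x (n+1) k) * X) := by
      rw [hp (n+1), reflect_prod_lin_fin]
    rw [h4] at h3
    have h5 : ∀ k ∈ Finset.range (n+1), reflect (n+1) (Polynomial.C (J n k) * p k)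
        = Polynomial.C (J n k) *
          ((∏ l : Fin k, (1 - Polynomial.C (x k l) * X)) * X ^ (n+1-k)) := by
      intro k hk
      have hk' : k ≤ n := by
        have := Finset.mem_range.mp hk
        omega
      rw [reflect_C_mul, h2 k hk']
    rw [Finset.sum_congr rfl h5] at h3
    have hps := congrArg (Polynomial.coeToPowerSeries.ringHom (R := ℝ)) h3
    simp only [map_add, map_prod, map_sum, map_mul, map_sub, map_one, map_pow,
      Polynomial.coeToPowerSeries.ringHom_apply, Polynomial.coe_C, Polynomial.coe_X] at hps
    exact hps
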